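/- Every nonzero derivation D of the polynomial ring K[X] in one variable over a field K of characteristic zero that is locally finite has the form D = (aX + b) d/dX for some a, b ∈ K. -/

import Mathlib

/-- Every nonzero locally finite derivation of `K[X]` has the form
`D = (aX + b) d/dX`. -/
theorem locallyFinite_derivation_polynomial_one_var
    {K : Type*} [Field K] [CharZero K]
    (D : Polynomial K → Polynomial K)
    (hadd : ∀ f g : Polynomial K, D (f + g) = D f + D g)
    (hsmul : ∀ (c : K) (f : Polynomial K), D (c • f) = c • D f)
    (hLeibniz : ∀ f g : Polynomial K, D (f * g) = f * D g + g * D f)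
    (hD0 : D ≠ 0)
    (hlf : ∀ f : Polynomial K,
      FiniteDimensional K (Submodule.span K (Set.range fun n : ℕ => D^[n] f))) :
    ∃ a b : K, ∀ f : Polynomial K,
      D f = (Polynomial.C a * Polynomial.X + Polynomial.C b) * Polynomial.derivative f := by
  classical
  -- D kills constants
  have h1 : D 1 = 0 := by
    have h := hLeibniz 1 1
    simp only [mul_one, one_mul] at h
    exact left_eq_add.mp h
  have hC : ∀ c : K, D (Polynomial.C c) = 0 := by
    intro c
    have hc : (Polynomial.C c : Polynomial K) = c • (1 : Polynomial K) := by
      rw [Polynomial.smul_eq_C_mul, mul_one]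
    rw [hc, hsmul, h1, smul_zero]
  set p := D Polynomial.X with hp
  -- D f = p * f'
  have key : ∀ f, D f = p * Polynomial.derivative f := by
    intro f
    induction f using Polynomial.induction_on with
    | C c => simp [hC]
    | add f g hf hg => rw [hadd, hf, hg, Polynomial.derivative_add]; ring
    | monomial n c ih =>
      have hrw : Polynomial.C c * Polynomial.X ^ (n + 1) =
          (Polynomial.C c * Polynomial.X ^ n) * Polynomial.X := by ring
      rw [hrw, hLeibniz, ih, ← hp]
      simp only [Polynomial.derivative_mul, Polynomial.derivative_X, Polynomial.derivative_C,
        Polynomial.derivative_X_pow, mul_one]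
      ring
  -- degree of p is at most 1
  have hdeg : p.natDegree ≤ 1 := by
    by_contra h
    push_neg at h
    set q : ℕ → Polynomial K := fun n => D^[n] Polynomial.X with hq
    have hdq : ∀ n : ℕ, (q n).natDegree = n * (p.natDegree - 1) + 1 := by
      intro n
      induction n with
      | zero => simp [hq]
      | succ n ih =>
        have h1n : 1 ≤ (q n).natDegree := by omega
        have hstep : q (n + 1) = p * Polynomial.derivative (q n) := by
          simp only [hq, Function.iterate_succ_apply']
          exact key _
        have hdd : (Polynomial.derivative (q n)).degree = ((q n).natDegree - 1 : ℕ) :=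
          Polynomial.degree_derivative_eq _ (by omega)
        have hd0 : Polynomial.derivative (q n) ≠ 0 := by
          intro h0
          rw [h0, Polynomial.degree_zero] at hdd
          simp at hdd
        have hdn : (Polynomial.derivative (q n)).natDegree = (q n).natDegree - 1 :=
          Polynomial.natDegree_eq_of_degree_eq_some hdd
        have hp0 : p ≠ 0 := by
          intro h0
          rw [h0, Polynomial.natDegree_zero] at h
          omega
        rw [hstep, Polynomial.natDegree_mul hp0 hd0, hdn, ih]
        have h2 : 2 ≤ p.natDegree := h
        have h3 : (n + 1) * (p.natDegree - 1) = n * (p.natDegree - 1) + (p.natDegree - 1) := by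
          ring
        omega
    -- finite dimensionality gives a uniform degree bound
    have hfd := hlf Polynomial.X
    have hfg : (Submodule.span K (Set.range fun n : ℕ => D^[n] Polynomial.X)).FG :=
      (Submodule.fg_iff_finiteDimensional _).mpr hfd
    obtain ⟨S, hS⟩ := hfg
    set N : ℕ := S.sup Polynomial.natDegree with hN
    have hle : Submodule.span K (Set.range fun n : ℕ => D^[n] Polynomial.X) ≤
        Polynomial.degreeLE K (N : ℕ) := by
      rw [← hS, Submodule.span_le]
      intro s hs
      rw [SetLike.mem_coe, Polynomial.mem_degreeLE]
      calc s.degree ≤ (s.natDegree : WithBot ℕ) := Polynomial.degree_le_natDegree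
        _ ≤ (N : WithBot ℕ) := by
            exact_mod_cast Finset.le_sup (f := Polynomial.natDegree) hs
    have hmem : ∀ n : ℕ, q n ∈ Polynomial.degreeLE K (N : ℕ) := by
      intro n
      exact hle (Submodule.subset_span ⟨n, rfl⟩)
    have hbd : (q N).natDegree ≤ N := by
      have := hmem N
      rw [Polynomial.mem_degreeLE] at this
      exact Polynomial.natDegree_le_iff_degree_le.mpr this
    have h4 := hdq N
    have h5 : N ≤ N * (p.natDegree - 1) := Nat.le_mul_of_pos_right _ (by omega)
    omega
  -- conclude
  refine ⟨p.coeff 1, p.coeff 0, fun f => ?_⟩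
  have hpe : p = Polynomial.C (p.coeff 1) * Polynomial.X + Polynomial.C (p.coeff 0) :=
    Polynomial.eq_X_add_C_of_degree_le_one
      (Polynomial.degree_le_natDegree.trans (by exact_mod_cast hdeg))
  rw [key f, ← hpe]
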